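/- Let X : [0,1] → ℝ be a centered stochastic process whose covariance R(s,t) = E(X_s X_t) has finite ρ-variation in the sense that for every interval [s,t] and partition s = t_0 < ... < t_n = t, Σ_{i,j} |E(X_{t_{i-1},t_i} X_{t_{j-1},t_j})|^ρ ≤ C|t−s|. Then for all p ≥ 1 and all M ≤ N ≤ 2^p, the Schauder coefficients X_{pm} = 2X(t^1_{pm}) − X(t^0_{pm}) − X(t^2_{pm}) satisfy Σ_{m_1,m_2=M}^{N} |E(X_{pm_1} X_{pm_2})|^ρ ≲ (N − M + 1) 2^{-p}. -/

import Mathlib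

noncomputable section
open Set MeasureTheory

lemma aux_mul_integrable {Ω : Type} [MeasurableSpace Ω] {P : Measure Ω}
    {f g : Ω → ℝ} (hf : MemLp f 2 P) (hg : MemLp g 2 P) :
    Integrable (fun ω => f ω * g ω) P := by
  have h := (((hf.add hg).integrable_sq.sub hf.integrable_sq).sub hg.integrable_sq).div_const 2
  have he : (fun ω => f ω * g ω)
      = fun ω => (((f ω + g ω) ^ 2 - f ω ^ 2) - g ω ^ 2) / 2 := by
    funext ω; ring
  rw [he]; exact h

lemma aux_integral_split {Ω : Type} [MeasurableSpace Ω] (P : Measure Ω)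
    {A B A' B' : Ω → ℝ} (hA : MemLp A 2 P) (hB : MemLp B 2 P)
    (hA' : MemLp A' 2 P) (hB' : MemLp B' 2 P) :
    ∫ ω, (A ω - B ω) * (A' ω - B' ω) ∂P
      = ∫ ω, A ω * A' ω ∂P - ∫ ω, A ω * B' ω ∂P - ∫ ω, B ω * A' ω ∂P
        + ∫ ω, B ω * B' ω ∂P := by
  have he : (fun ω => (A ω - B ω) * (A' ω - B' ω))
      = fun ω => A ω * A' ω - A ω * B' ω - B ω * A' ω + B ω * B' ω := by
    funext ω; ring
  have i1 : Integrable (fun ω => A ω * A' ω) P := aux_mul_integrable hA hA'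
  have i2 : Integrable (fun ω => A ω * B' ω) P := aux_mul_integrable hA hB'
  have i3 : Integrable (fun ω => B ω * A' ω) P := aux_mul_integrable hB hA'
  have i4 : Integrable (fun ω => B ω * B' ω) P := aux_mul_integrable hB hB'
  have i5 : Integrable (fun ω => A ω * A' ω - A ω * B' ω) P := i1.sub i2
  have i6 : Integrable (fun ω => A ω * A' ω - A ω * B' ω - B ω * A' ω) P := i5.sub i3
  rw [he, integral_add i6 i4, integral_sub i5 i3, integral_sub i1 i2]

lemma aux_two_rpow {ρ : ℝ} (hρ : 1 ≤ ρ) {a b : ℝ} (ha : 0 ≤ a) (hb : 0 ≤ b) :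
    (a + b) ^ ρ ≤ 2 ^ (ρ - 1) * (a ^ ρ + b ^ ρ) := by
  have hconv := (convexOn_rpow hρ).2 (show a ∈ Ici (0:ℝ) from ha)
    (show b ∈ Ici (0:ℝ) from hb) (by norm_num : (0:ℝ) ≤ 1/2) (by norm_num : (0:ℝ) ≤ 1/2)
    (by norm_num)
  simp only [smul_eq_mul] at hconv
  have h1 : a + b = 2 * ((1/2) * a + (1/2) * b) := by ring
  have h2 : (a + b) ^ ρ = 2 ^ ρ * ((1/2) * a + (1/2) * b) ^ ρ := by
    rw [h1, Real.mul_rpow (by norm_num) (by positivity)]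
  rw [h2]
  have h3 : (2:ℝ) ^ ρ * ((1/2) * a ^ ρ + (1/2) * b ^ ρ) = 2 ^ (ρ - 1) * (a ^ ρ + b ^ ρ) := by
    rw [Real.rpow_sub (by norm_num : (0:ℝ) < 2), Real.rpow_one]; ring
  calc (2:ℝ) ^ ρ * ((1/2) * a + (1/2) * b) ^ ρ
      ≤ 2 ^ ρ * ((1/2) * a ^ ρ + (1/2) * b ^ ρ) := by
        apply mul_le_mul_of_nonneg_left hconv (Real.rpow_nonneg (by norm_num) _)
    _ = 2 ^ (ρ - 1) * (a ^ ρ + b ^ ρ) := h3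

lemma aux_four_rpow {ρ : ℝ} (hρ : 1 ≤ ρ) {a b c d : ℝ}
    (ha : 0 ≤ a) (hb : 0 ≤ b) (hc : 0 ≤ c) (hd : 0 ≤ d) :
    (a + b + c + d) ^ ρ ≤ 4 ^ (ρ - 1) * (a ^ ρ + b ^ ρ + c ^ ρ + d ^ ρ) := by
  have h1 : (a + b + c + d) ^ ρ ≤ 2 ^ (ρ - 1) * ((a + b) ^ ρ + (c + d) ^ ρ) := by
    have h := aux_two_rpow hρ (add_nonneg ha hb) (add_nonneg hc hd)
    rw [show a + b + (c + d) = a + b + c + d from by ring] at h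
    exact h
  have h2 := aux_two_rpow hρ ha hb
  have h3 := aux_two_rpow hρ hc hd
  have hpow : (0:ℝ) ≤ 2 ^ (ρ - 1) := Real.rpow_nonneg (by norm_num) _
  have h4 : (2:ℝ) ^ (ρ - 1) * (2 ^ (ρ - 1)) = 4 ^ (ρ - 1) := by
    rw [← Real.mul_rpow (by norm_num) (by norm_num)]; norm_num
  calc (a + b + c + d) ^ ρ ≤ 2 ^ (ρ - 1) * ((a + b) ^ ρ + (c + d) ^ ρ) := h1
    _ ≤ 2 ^ (ρ - 1) * (2 ^ (ρ - 1) * (a ^ ρ + b ^ ρ) + 2 ^ (ρ - 1) * (c ^ ρ + d ^ ρ)) := by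
        apply mul_le_mul_of_nonneg_left (by linarith) hpow
    _ = 4 ^ (ρ - 1) * (a ^ ρ + b ^ ρ + c ^ ρ + d ^ ρ) := by rw [← h4]; ring

lemma aux_sum_range (g : ℕ → ℝ) (K : ℕ) :
    ∑ i ∈ Finset.Icc 1 (2 * K), g i = ∑ k ∈ Finset.range K, (g (2 * k + 1) + g (2 * k + 2)) := by
  induction K with
  | zero => simp
  | succ K ih =>
    rw [Finset.sum_range_succ, ← ih]
    have h2 : 2 * (K + 1) = (2 * K + 1) + 1 := by ring
    rw [h2, Finset.sum_Icc_succ_top (by omega), Finset.sum_Icc_succ_top (by omega)]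
    ring

lemma aux_sum_Icc (g : ℕ → ℝ) (M N : ℕ) (h : M ≤ N + 1) :
    ∑ i ∈ Finset.Icc 1 (2 * (N + 1 - M)), g i
      = ∑ m ∈ Finset.Icc M N, (g (2 * (m - M) + 1) + g (2 * (m - M) + 2)) := by
  rw [aux_sum_range, ← Finset.Ico_add_one_right_eq_Icc, Finset.sum_Ico_eq_sum_range]
  refine Finset.sum_congr rfl fun k _ => ?_
  simp [Nat.add_sub_cancel_left]

/-- The Schauder coefficient process `X_{pm} = 2X(t¹_{pm}) - X(t⁰_{pm}) - X(t²_{pm})`. -/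
def scoeff {Ω : Type*} (X : ℝ → Ω → ℝ) (p m : ℕ) (ω : Ω) : ℝ :=
  2 * X ((2 * (m : ℝ) - 1) / 2 ^ (p + 1)) ω - X (((m : ℝ) - 1) / 2 ^ p) ω -
    X ((m : ℝ) / 2 ^ p) ω

/-- If the covariance of a centered process `X` has finite `ρ`-variation in the sense that
`∑_{i,j} |E(X_{t_{i-1},t_i} X_{t_{j-1},t_j})|^ρ ≤ C|t-s|` for every partition of every
interval `[s,t] ⊆ [0,1]`, then the Schauder coefficients of generation `p` satisfy
`∑_{m₁,m₂=M}^{N} |E(X_{pm₁} X_{pm₂})|^ρ ≲ (N-M+1) 2^{-p}`. -/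
theorem rho_variation_dyadic_generation (ρ : ℝ) (hρ : 1 ≤ ρ) :
    ∃ D > (0:ℝ), ∀ (Ω : Type) (_ : MeasurableSpace Ω) (P : Measure Ω),
      IsProbabilityMeasure P →
      ∀ (X : ℝ → Ω → ℝ) (C : ℝ), 0 ≤ C →
      (∀ t ∈ Icc (0:ℝ) 1, MemLp (X t) 2 P) →
      (∀ t ∈ Icc (0:ℝ) 1, ∫ ω, X t ω ∂P = 0) →
      -- (ρ-var): finite ρ-variation of the covariance
      (∀ s ∈ Icc (0:ℝ) 1, ∀ t ∈ Icc (0:ℝ) 1, s ≤ t →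
        ∀ (n : ℕ) (u : ℕ → ℝ), u 0 = s → u n = t → (∀ i < n, u i ≤ u (i + 1)) →
          ∑ i ∈ Finset.Icc 1 n, ∑ j ∈ Finset.Icc 1 n,
            |∫ ω, (X (u i) ω - X (u (i - 1)) ω) * (X (u j) ω - X (u (j - 1)) ω) ∂P| ^ ρ
              ≤ C * (t - s)) →
      ∀ p : ℕ, 1 ≤ p → ∀ M N : ℕ, 1 ≤ M → M ≤ N → N ≤ 2 ^ p →
        ∑ m₁ ∈ Finset.Icc M N, ∑ m₂ ∈ Finset.Icc M N,
          |∫ ω, scoeff X p m₁ ω * scoeff X p m₂ ω ∂P| ^ ρ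
            ≤ D * C * ((N : ℝ) - M + 1) * (2 : ℝ) ^ (-(p : ℤ)) := by
  have hρ0 : (0:ℝ) ≤ ρ := le_trans zero_le_one hρ
  refine ⟨(4:ℝ) ^ (ρ - 1), Real.rpow_pos_of_pos (by norm_num) _, ?_⟩
  intro Ω inst P hP X C hC hmem hcent hvar p hp M N hM hMN hN
  set n : ℕ := 2 * (N + 1 - M) with hn
  set u : ℕ → ℝ := fun i => (2 * ((M:ℝ) - 1) + i) / 2 ^ (p + 1) with hu
  have hM1 : (1:ℝ) ≤ (M:ℝ) := by exact_mod_cast hM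
  have hNR : (M:ℝ) ≤ (N:ℝ) := by exact_mod_cast hMN
  have hN2 : (N:ℝ) ≤ 2 ^ p := by exact_mod_cast hN
  have h2p : (0:ℝ) < 2 ^ (p+1) := by positivity
  have h2p' : (0:ℝ) < 2 ^ p := by positivity
  have hMN1 : M ≤ N + 1 := by omega
  have hnR : (n:ℝ) = 2 * ((N:ℝ) + 1 - (M:ℝ)) := by
    rw [hn, Nat.cast_mul, Nat.cast_sub hMN1]; push_cast; ring
  -- the partition points lie in [0,1]
  have humem : ∀ i, i ≤ n → u i ∈ Icc (0:ℝ) 1 := by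
    intro i hi
    have hiR : (i:ℝ) ≤ (n:ℝ) := by exact_mod_cast hi
    rw [hnR] at hiR
    constructor
    · apply div_nonneg _ (le_of_lt h2p)
      have : (0:ℝ) ≤ (i:ℝ) := Nat.cast_nonneg i
      linarith
    · rw [div_le_one h2p]
      have hps : (2:ℝ)^(p+1) = 2 * 2^p := by ring
      rw [hps]; linarith
  have hXmem : ∀ i, i ≤ n → MemLp (X (u i)) 2 P := fun i hi => hmem _ (humem i hi)
  -- endpoints
  have hu0 : u 0 = ((M:ℝ) - 1) / 2 ^ p := by
    rw [hu]; simp only [Nat.cast_zero, add_zero]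
    rw [pow_succ]; field_simp
  have hun : u n = (N:ℝ) / 2 ^ p := by
    rw [hu]; simp only
    rw [hnR, pow_succ]; field_simp; ring
  have hmono : ∀ i, i < n → u i ≤ u (i + 1) := by
    intro i _
    rw [hu]; simp only
    gcongr
    push_cast; linarith
  have hsmem : ((M:ℝ) - 1) / 2 ^ p ∈ Icc (0:ℝ) 1 := hu0 ▸ humem 0 (Nat.zero_le n)
  have htmem : (N:ℝ) / 2 ^ p ∈ Icc (0:ℝ) 1 := hun ▸ humem n le_rfl
  have hst : ((M:ℝ) - 1) / 2 ^ p ≤ (N:ℝ) / 2 ^ p := by gcongr <;> linarith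
  have Hvar := hvar _ hsmem _ htmem hst n u hu0 hun hmono
  -- point identities
  have hu_a : ∀ m, M ≤ m → u (2 * (m - M) + 1) = (2 * (m:ℝ) - 1) / 2 ^ (p + 1) := by
    intro m hm; rw [hu]; simp only
    congr 1
    push_cast [Nat.cast_sub hm]; ring
  have hu_0 : ∀ m, M ≤ m → u (2 * (m - M)) = ((m:ℝ) - 1) / 2 ^ p := by
    intro m hm; rw [hu]; simp only
    rw [pow_succ]
    push_cast [Nat.cast_sub hm]
    field_simp; ring
  have hu_2 : ∀ m, M ≤ m → u (2 * (m - M) + 2) = (m:ℝ) / 2 ^ p := by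
    intro m hm; rw [hu]; simp only
    rw [pow_succ]
    push_cast [Nat.cast_sub hm]
    field_simp; ring
  have hsc : ∀ m, M ≤ m → ∀ ω, scoeff X p m ω
      = (X (u (2 * (m - M) + 1)) ω - X (u (2 * (m - M))) ω)
        - (X (u (2 * (m - M) + 2)) ω - X (u (2 * (m - M) + 1)) ω) := by
    intro m hm ω
    rw [hu_a m hm, hu_0 m hm, hu_2 m hm, scoeff]
    ring
  -- abbreviation
  set F : ℕ → ℕ → ℝ := fun i j =>
    |∫ ω, (X (u i) ω - X (u (i - 1)) ω) * (X (u j) ω - X (u (j - 1)) ω) ∂P| ^ ρ with hF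
  have hFnn : ∀ i j, 0 ≤ F i j := fun i j => Real.rpow_nonneg (abs_nonneg _) _
  -- pointwise bound on covariance of Schauder coefficients
  have key : ∀ m₁ ∈ Finset.Icc M N, ∀ m₂ ∈ Finset.Icc M N,
      |∫ ω, scoeff X p m₁ ω * scoeff X p m₂ ω ∂P| ^ ρ ≤
        (4:ℝ) ^ (ρ - 1) * (F (2*(m₁-M)+1) (2*(m₂-M)+1) + F (2*(m₁-M)+1) (2*(m₂-M)+2)
          + F (2*(m₁-M)+2) (2*(m₂-M)+1) + F (2*(m₁-M)+2) (2*(m₂-M)+2)) := by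
    intro m₁ hm₁ m₂ hm₂
    rw [Finset.mem_Icc] at hm₁ hm₂
    have hb₁ : 2 * (m₁ - M) + 2 ≤ n := by omega
    have hb₂ : 2 * (m₂ - M) + 2 ≤ n := by omega
    have mA₁ : MemLp (fun ω => X (u (2*(m₁-M)+1)) ω - X (u (2*(m₁-M))) ω) 2 P :=
      (hXmem _ (by omega)).sub (hXmem _ (by omega))
    have mB₁ : MemLp (fun ω => X (u (2*(m₁-M)+2)) ω - X (u (2*(m₁-M)+1)) ω) 2 P :=
      (hXmem _ (by omega)).sub (hXmem _ (by omega))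
    have mA₂ : MemLp (fun ω => X (u (2*(m₂-M)+1)) ω - X (u (2*(m₂-M))) ω) 2 P :=
      (hXmem _ (by omega)).sub (hXmem _ (by omega))
    have mB₂ : MemLp (fun ω => X (u (2*(m₂-M)+2)) ω - X (u (2*(m₂-M)+1)) ω) 2 P :=
      (hXmem _ (by omega)).sub (hXmem _ (by omega))
    have hint : ∫ ω, scoeff X p m₁ ω * scoeff X p m₂ ω ∂P
        = (∫ ω, (X (u (2*(m₁-M)+1)) ω - X (u (2*(m₁-M))) ω)
              * (X (u (2*(m₂-M)+1)) ω - X (u (2*(m₂-M))) ω) ∂P)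
          - (∫ ω, (X (u (2*(m₁-M)+1)) ω - X (u (2*(m₁-M))) ω)
              * (X (u (2*(m₂-M)+2)) ω - X (u (2*(m₂-M)+1)) ω) ∂P)
          - (∫ ω, (X (u (2*(m₁-M)+2)) ω - X (u (2*(m₁-M)+1)) ω)
              * (X (u (2*(m₂-M)+1)) ω - X (u (2*(m₂-M))) ω) ∂P)
          + (∫ ω, (X (u (2*(m₁-M)+2)) ω - X (u (2*(m₁-M)+1)) ω)
              * (X (u (2*(m₂-M)+2)) ω - X (u (2*(m₂-M)+1)) ω) ∂P) := by
      have he : (fun ω => scoeff X p m₁ ω * scoeff X p m₂ ω)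
          = fun ω => ((X (u (2*(m₁-M)+1)) ω - X (u (2*(m₁-M))) ω)
              - (X (u (2*(m₁-M)+2)) ω - X (u (2*(m₁-M)+1)) ω))
            * ((X (u (2*(m₂-M)+1)) ω - X (u (2*(m₂-M))) ω)
              - (X (u (2*(m₂-M)+2)) ω - X (u (2*(m₂-M)+1)) ω)) := by
        funext ω; rw [hsc m₁ hm₁.1 ω, hsc m₂ hm₂.1 ω]
      rw [he]
      exact aux_integral_split P mA₁ mB₁ mA₂ mB₂
    rw [hint]
    set w := ∫ ω, (X (u (2*(m₁-M)+1)) ω - X (u (2*(m₁-M))) ω)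
        * (X (u (2*(m₂-M)+1)) ω - X (u (2*(m₂-M))) ω) ∂P with hw
    set x := ∫ ω, (X (u (2*(m₁-M)+1)) ω - X (u (2*(m₁-M))) ω)
        * (X (u (2*(m₂-M)+2)) ω - X (u (2*(m₂-M)+1)) ω) ∂P with hx
    set y := ∫ ω, (X (u (2*(m₁-M)+2)) ω - X (u (2*(m₁-M)+1)) ω)
        * (X (u (2*(m₂-M)+1)) ω - X (u (2*(m₂-M))) ω) ∂P with hy
    set z := ∫ ω, (X (u (2*(m₁-M)+2)) ω - X (u (2*(m₁-M)+1)) ω)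
        * (X (u (2*(m₂-M)+2)) ω - X (u (2*(m₂-M)+1)) ω) ∂P with hz
    have habs : |w - x - y + z| ≤ |w| + |x| + |y| + |z| := by
      have e1 : w - x - y + z = ((w + -x) + -y) + z := by ring
      rw [e1]
      refine (abs_add_le _ _).trans ?_
      have h2 := abs_add_le (w + -x) (-y)
      have h3 := abs_add_le w (-x)
      simp only [abs_neg] at h2 h3
      linarith
    have hstep : |w - x - y + z| ^ ρ ≤ (|w| + |x| + |y| + |z|) ^ ρ :=
      Real.rpow_le_rpow (abs_nonneg _) habs hρ0
    refine hstep.trans ?_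
    have h4 := aux_four_rpow hρ (abs_nonneg w) (abs_nonneg x) (abs_nonneg y) (abs_nonneg z)
    refine h4.trans (le_of_eq ?_)
    rw [hF]
    simp only [Nat.add_sub_cancel, show ∀ k : ℕ, k + 2 - 1 = k + 1 from fun k => rfl]
    rfl
  -- sum the pointwise bounds and reindex
  have hre : ∀ g : ℕ → ℝ, ∑ i ∈ Finset.Icc 1 n, g i
      = ∑ m ∈ Finset.Icc M N, (g (2 * (m - M) + 1) + g (2 * (m - M) + 2)) := by
    intro g; rw [hn]; exact aux_sum_Icc g M N hMN1
  have hsum_eq : ∑ i ∈ Finset.Icc 1 n, ∑ j ∈ Finset.Icc 1 n, F i j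
      = ∑ m₁ ∈ Finset.Icc M N, ∑ m₂ ∈ Finset.Icc M N,
          (F (2*(m₁-M)+1) (2*(m₂-M)+1) + F (2*(m₁-M)+1) (2*(m₂-M)+2)
            + F (2*(m₁-M)+2) (2*(m₂-M)+1) + F (2*(m₁-M)+2) (2*(m₂-M)+2)) := by
    rw [hre (fun i => ∑ j ∈ Finset.Icc 1 n, F i j)]
    refine Finset.sum_congr rfl fun m₁ _ => ?_
    rw [hre (fun j => F (2*(m₁-M)+1) j), hre (fun j => F (2*(m₁-M)+2) j),
      ← Finset.sum_add_distrib]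
    refine Finset.sum_congr rfl fun m₂ _ => ?_
    ring
  have hts : C * ((N:ℝ) / 2 ^ p - ((M:ℝ) - 1) / 2 ^ p)
      = C * (((N:ℝ) - M + 1) * (2:ℝ) ^ (-(p:ℤ))) := by
    have h2 : ((2:ℝ)) ^ (-(p:ℤ)) = (2 ^ p)⁻¹ := by
      rw [zpow_neg, zpow_natCast]
    have h3 : (N:ℝ) / 2 ^ p - ((M:ℝ) - 1) / 2 ^ p = ((N:ℝ) - M + 1) * ((2:ℝ) ^ p)⁻¹ := by
      field_simp
      ring
    rw [h2, h3]
  calc ∑ m₁ ∈ Finset.Icc M N, ∑ m₂ ∈ Finset.Icc M N,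
        |∫ ω, scoeff X p m₁ ω * scoeff X p m₂ ω ∂P| ^ ρ
      ≤ ∑ m₁ ∈ Finset.Icc M N, ∑ m₂ ∈ Finset.Icc M N,
          (4:ℝ) ^ (ρ - 1) * (F (2*(m₁-M)+1) (2*(m₂-M)+1) + F (2*(m₁-M)+1) (2*(m₂-M)+2)
            + F (2*(m₁-M)+2) (2*(m₂-M)+1) + F (2*(m₁-M)+2) (2*(m₂-M)+2)) :=
        Finset.sum_le_sum fun m₁ hm₁ => Finset.sum_le_sum fun m₂ hm₂ => key m₁ hm₁ m₂ hm₂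
    _ = (4:ℝ) ^ (ρ - 1) * ∑ i ∈ Finset.Icc 1 n, ∑ j ∈ Finset.Icc 1 n, F i j := by
        rw [hsum_eq]
        simp_rw [Finset.mul_sum]
    _ ≤ (4:ℝ) ^ (ρ - 1) * (C * ((N:ℝ) / 2 ^ p - ((M:ℝ) - 1) / 2 ^ p)) :=
        mul_le_mul_of_nonneg_left Hvar (Real.rpow_nonneg (by norm_num) _)
    _ = (4:ℝ) ^ (ρ - 1) * C * ((N:ℝ) - M + 1) * (2:ℝ) ^ (-(p:ℤ)) := by
        rw [hts]; ring
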